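/- arXiv:1103.4982 — 3 statements merged into one kernel-verified Lean document; each statement's English description precedes it below -/
import Mathlib

section
/- Let V be a finite type with exactly 6 elements and Γ a connected simple graph on V with exactly 6 edges. Suppose the group Perm(Fin 3) acts on V so that the action preserves adjacency (for all g and all u, v: Γ.Adj u v ↔ Γ.Adj (g • u) (g • v)) and is transitive on V. Fix any element σ of order 3 and any transposition τ in Perm(Fin 3). Then there exists a bijection e : V ≃ ZMod 6 such that for every vertex v one has e(σ • v) = e(v) + 2 and e(τ • v) = 1 − e(v), and for all u, v one has Γ.Adj u v if and only if e(v) = e(u) + 1 or e(u) = e(v) + 1. In particular Γ is a 6-cycle, σ acts as rotation by 2 and τ as a reflection, so up to isomorphism there is only one transitive S₃-action on such a graph. -/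
private def ff (σ τ : Equiv.Perm (Fin 3)) (c : ZMod 6) (g : Equiv.Perm (Fin 3)) : ZMod 6 :=
  if g = 1 then c else if g = σ then c+2 else if g = σ*σ then c+4
  else if g = τ then 1-c else if g = σ*τ then 3-c else 5-c

private lemma dd1 : ∀ s : Equiv.Perm (Fin 3), s ≠ 1 → s*s ≠ 1 → s*s*s = 1 := by decide

private lemma dd2 : ∀ s t : Equiv.Perm (Fin 3), s*s*s = 1 → s ≠ 1 → t*t = 1 → t ≠ 1 →
    ¬(t = 1 ∨ t = s ∨ t = s*s) := by decide

private lemma dd3 : ∀ s a b : Equiv.Perm (Fin 3), s*s*s = 1 → s ≠ 1 →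
    (a = 1 ∨ a = s ∨ a = s*s) → (a⁻¹*b = s ∨ a⁻¹*b = s⁻¹) →
    (b = 1 ∨ b = s ∨ b = s*s) := by decide

set_option synthInstance.maxSize 4000 in
set_option maxHeartbeats 1000000 in
private lemma bigD : ∀ σ τ t₁ t₂ : Equiv.Perm (Fin 3), σ*σ*σ = 1 → σ ≠ 1 → τ*τ = 1 → τ ≠ 1 →
    t₁*t₁ = 1 → t₁ ≠ 1 → t₂*t₂ = 1 → t₂ ≠ 1 → t₁ ≠ t₂ →
    ∃ c : ZMod 6,
      (∀ a b : Equiv.Perm (Fin 3), ff σ τ c a = ff σ τ c b → a = b) ∧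
      (∀ g, ff σ τ c (σ*g) = ff σ τ c g + 2) ∧
      (∀ g, ff σ τ c (τ*g) = 1 - ff σ τ c g) ∧
      (∀ g h, (g⁻¹*h = t₁ ∨ g⁻¹*h = t₂) ↔
        (ff σ τ c h = ff σ τ c g + 1 ∨ ff σ τ c g = ff σ τ c h + 1)) := by
  decide

/-- The unique transitive `S₃`-action on a connected graph with 6 vertices and 6 edges:
the graph is a 6-cycle, `σ` acts as rotation by 2 and `τ` as a reflection. -/
theorem stmt_1 (V : Type*) [Fintype V] (hV : Fintype.card V = 6)
    (Γ : SimpleGraph V) (hconn : Γ.Connected)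
    (hedge : Γ.edgeSet.ncard = 6)
    [MulAction (Equiv.Perm (Fin 3)) V]
    (hadj : ∀ (g : Equiv.Perm (Fin 3)) (u v : V), Γ.Adj u v ↔ Γ.Adj (g • u) (g • v))
    (htrans : MulAction.IsPretransitive (Equiv.Perm (Fin 3)) V)
    (σ : Equiv.Perm (Fin 3)) (hσ : orderOf σ = 3)
    (τ : Equiv.Perm (Fin 3)) (hτ : τ.IsSwap) :
    ∃ e : V ≃ ZMod 6,
      (∀ v : V, e (σ • v) = e v + 2) ∧
      (∀ v : V, e (τ • v) = 1 - e v) ∧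
      (∀ u v : V, Γ.Adj u v ↔ (e v = e u + 1 ∨ e u = e v + 1)) := by
  classical
  -- basic facts about σ and τ
  have hσ3 : σ*σ*σ = 1 := by
    have h := pow_orderOf_eq_one σ
    rw [hσ] at h
    simpa [pow_succ, mul_assoc] using h
  have hσ1 : σ ≠ 1 := by
    intro h; rw [h, orderOf_one] at hσ; omega
  have hτ2 : τ*τ = 1 := by
    obtain ⟨a, b, hab, rfl⟩ := hτ; exact Equiv.swap_mul_self a b
  have hτ1 : τ ≠ 1 := by
    obtain ⟨a, b, hab, rfl⟩ := hτ
    intro h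
    have : Equiv.swap a b a = a := by rw [h]; rfl
    rw [Equiv.swap_apply_left] at this
    exact hab this.symm
  -- a base point
  obtain ⟨v₀⟩ : Nonempty V := Fintype.card_pos_iff.mp (by omega)
  have hcard : Fintype.card (Equiv.Perm (Fin 3)) = 6 := by
    rw [Fintype.card_perm, Fintype.card_fin]
    rfl
  -- the action is simply transitive
  have key : ∀ v : V, Function.Bijective (fun g : Equiv.Perm (Fin 3) => g • v) := by
    intro v
    refine (Fintype.bijective_iff_surjective_and_card _).mpr ⟨?_, by rw [hcard, hV]⟩
    intro w
    exact htrans.exists_smul_eq v w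
  set φ : Equiv.Perm (Fin 3) ≃ V := Equiv.ofBijective _ (key v₀) with hφdef
  have hφ : ∀ g : Equiv.Perm (Fin 3), φ g = g • v₀ := fun g => rfl
  have hφs : ∀ v : V, (φ.symm v) • v₀ = v := by
    intro v; rw [← hφ]; exact φ.apply_symm_apply v
  have hφmul : ∀ (g : Equiv.Perm (Fin 3)) (v : V), φ.symm (g • v) = g * φ.symm v := by
    intro g v
    apply φ.injective
    rw [φ.apply_symm_apply, hφ, mul_smul, hφs]
  -- the connection set
  set S : Set (Equiv.Perm (Fin 3)) := {g | Γ.Adj v₀ (g • v₀)} with hSdef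
  have hAdjS : ∀ u v : V, Γ.Adj u v ↔ (φ.symm u)⁻¹ * (φ.symm v) ∈ S := by
    intro u v
    rw [hadj ((φ.symm u)⁻¹) u v]
    have h1 : (φ.symm u)⁻¹ • u = v₀ := by
      rw [inv_smul_eq_iff]
      exact (hφs u).symm
    have h2 : (φ.symm u)⁻¹ • v = ((φ.symm u)⁻¹ * (φ.symm v)) • v₀ := by
      rw [mul_smul, hφs]
    rw [h1, h2]
    rfl
  -- degree is constant
  have hdeg : ∀ v : V, Γ.degree v = Γ.degree v₀ := by
    intro v
    obtain ⟨g, hg⟩ := htrans.exists_smul_eq v₀ v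
    have himg : (Γ.neighborFinset v₀).image (fun u => g • u) = Γ.neighborFinset v := by
      ext x
      simp only [Finset.mem_image, SimpleGraph.mem_neighborFinset]
      constructor
      · rintro ⟨u, hu, rfl⟩
        have := (hadj g v₀ u).mp hu
        rwa [hg] at this
      · intro hx
        refine ⟨g⁻¹ • x, ?_, by rw [← mul_smul, mul_inv_cancel, one_smul]⟩
        have := (hadj g⁻¹ v x).mp hx
        rwa [← hg, ← mul_smul, inv_mul_cancel, one_smul] at this
    rw [SimpleGraph.degree, SimpleGraph.degree, ← himg,
      Finset.card_image_of_injective _ (MulAction.injective g)]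
  have hedgecard : Γ.edgeFinset.card = 6 := by
    rw [SimpleGraph.edgeFinset, ← Set.ncard_eq_toFinset_card', hedge]
  have hdeg2 : Γ.degree v₀ = 2 := by
    have hsum := Γ.sum_degrees_eq_twice_card_edges
    rw [hedgecard] at hsum
    have : ∑ v : V, Γ.degree v = 6 * Γ.degree v₀ := by
      rw [Finset.sum_congr rfl (fun v _ => hdeg v), Finset.sum_const, Finset.card_univ, hV,
        smul_eq_mul]
    omega
  -- S has exactly two elements
  have hSimg : (fun g : Equiv.Perm (Fin 3) => g • v₀) '' S = Γ.neighborSet v₀ := by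
    ext x
    constructor
    · rintro ⟨g, hg, rfl⟩; exact hg
    · intro hx
      obtain ⟨g, rfl⟩ := (key v₀).2 x
      exact ⟨g, hx, rfl⟩
  have hS2 : S.ncard = 2 := by
    have h1 := Set.ncard_image_of_injective S (key v₀).1
    rw [hSimg] at h1
    rw [← h1, Set.ncard_eq_toFinset_card']
    rw [← hdeg2, SimpleGraph.degree, SimpleGraph.neighborFinset]
  have hS1 : (1 : Equiv.Perm (Fin 3)) ∉ S := by
    simp only [hSdef, Set.mem_setOf_eq, one_smul]
    exact Γ.irrefl
  have hSinv : ∀ s ∈ S, s⁻¹ ∈ S := by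
    intro s hs
    have h := (hadj s⁻¹ v₀ (s • v₀)).mp hs
    rw [← mul_smul, inv_mul_cancel, one_smul] at h
    exact h.symm
  obtain ⟨t₁, t₂, htne, hSeq⟩ := Set.ncard_eq_two.mp hS2
  -- every element of S is an involution (else Γ would be disconnected)
  have hinv2 : ∀ s ∈ S, s * s = 1 := by
    intro s hs
    by_contra hss
    have hs1 : s ≠ 1 := fun h => hS1 (h ▸ hs)
    have hs3 : s*s*s = 1 := dd1 s hs1 hss
    have hsi : s⁻¹ ∈ S := hSinv s hs
    have hsine : s⁻¹ ≠ s := by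
      intro h
      apply hss
      nth_rewrite 1 [← h]
      exact inv_mul_cancel s
    -- S = {s, s⁻¹}
    have hs' : s = t₁ ∨ s = t₂ := by
      rw [hSeq] at hs
      simpa using hs
    have hsi' : s⁻¹ = t₁ ∨ s⁻¹ = t₂ := by
      rw [hSeq] at hsi
      simpa using hsi
    have hset : (t₁ = s ∧ t₂ = s⁻¹) ∨ (t₁ = s⁻¹ ∧ t₂ = s) := by
      rcases hs' with h1 | h1 <;> rcases hsi' with h2 | h2
      · exact absurd (h2.trans h1.symm) hsine
      · exact Or.inl ⟨h1.symm, h2.symm⟩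
      · exact Or.inr ⟨h2.symm, h1.symm⟩
      · exact absurd (h2.trans h1.symm) hsine
    have hSss : ∀ x ∈ S, x = s ∨ x = s⁻¹ := by
      intro x hx
      rw [hSeq] at hx
      simp only [Set.mem_insert_iff, Set.mem_singleton_iff] at hx
      rcases hx with rfl | rfl
      · rcases hset with ⟨h1, _⟩ | ⟨h1, _⟩
        · exact Or.inl h1
        · exact Or.inr h1
      · rcases hset with ⟨_, h2⟩ | ⟨_, h2⟩
        · exact Or.inr h2
        · exact Or.inl h2
    -- everything reachable from v₀ lies in the orbit of ⟨s⟩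
    have hwalk : ∀ (a b : V), Γ.Walk a b →
        (φ.symm a = 1 ∨ φ.symm a = s ∨ φ.symm a = s*s) →
        (φ.symm b = 1 ∨ φ.symm b = s ∨ φ.symm b = s*s) := by
      intro a b p
      induction p with
      | nil => exact id
      | @cons a' x' b' hux hp ih =>
        intro ha
        apply ih
        have hmem := (hAdjS a' x').mp hux
        exact dd3 s (φ.symm a') (φ.symm x') hs3 hs1 ha (hSss _ hmem)
    have hv₀ : φ.symm v₀ = 1 := by
      apply φ.injective
      rw [φ.apply_symm_apply, hφ, one_smul]
    obtain ⟨p⟩ := (hconn v₀ (τ • v₀))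
    have := hwalk v₀ (τ • v₀) p (Or.inl hv₀)
    rw [hφmul, hv₀, mul_one] at this
    exact dd2 s τ hs3 hs1 hτ2 hτ1 this
  have ht₁S : t₁ ∈ S := by rw [hSeq]; left; rfl
  have ht₂S : t₂ ∈ S := by rw [hSeq]; right; rfl
  obtain ⟨c, hinj, hfσ, hfτ, hfadj⟩ := bigD σ τ t₁ t₂ hσ3 hσ1 hτ2 hτ1
    (hinv2 t₁ ht₁S) (fun h => hS1 (h ▸ ht₁S)) (hinv2 t₂ ht₂S) (fun h => hS1 (h ▸ ht₂S)) htne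
  have fbij : Function.Bijective (ff σ τ c) :=
    (Fintype.bijective_iff_injective_and_card _).mpr ⟨fun a b => hinj a b, by simp [hcard]⟩
  refine ⟨φ.symm.trans (Equiv.ofBijective _ fbij), ?_, ?_, ?_⟩
  · intro v
    show ff σ τ c (φ.symm (σ • v)) = ff σ τ c (φ.symm v) + 2
    rw [hφmul]
    exact hfσ _
  · intro v
    show ff σ τ c (φ.symm (τ • v)) = 1 - ff σ τ c (φ.symm v)
    rw [hφmul]
    exact hfτ _
  · intro u v
    rw [hAdjS u v, hSeq]
    show (φ.symm u)⁻¹ * (φ.symm v) ∈ ({t₁, t₂} : Set _) ↔ _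
    rw [Set.mem_insert_iff, Set.mem_singleton_iff]
    exact hfadj (φ.symm u) (φ.symm v)
end

section
/- Let V be a finite type with exactly 6 elements and Γ a connected simple graph on V. Suppose the group Perm(Fin 3) acts on V so that the action preserves adjacency (for all g and all u, v: Γ.Adj u v ↔ Γ.Adj (g • u) (g • v)) and is transitive on V. Then Γ has at least 6 edges. -/
/-- A connected graph on 6 vertices carrying a transitive `S₃`-action by graph
automorphisms has at least 6 edges. -/
theorem stmt_2 (V : Type*) [Fintype V] (hV : Fintype.card V = 6)
    (Γ : SimpleGraph V) (hconn : Γ.Connected)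
    [MulAction (Equiv.Perm (Fin 3)) V]
    (hadj : ∀ (g : Equiv.Perm (Fin 3)) (u v : V), Γ.Adj u v ↔ Γ.Adj (g • u) (g • v))
    (htrans : MulAction.IsPretransitive (Equiv.Perm (Fin 3)) V) :
    6 ≤ Γ.edgeSet.ncard := by
  classical
  -- work with edgeFinset
  have hE : Γ.edgeSet.ncard = Γ.edgeFinset.card := by
    rw [SimpleGraph.edgeFinset, Set.ncard_eq_toFinset_card']
  rw [hE]
  -- the action gives graph automorphisms, so all degrees are equal
  have hdeg : ∀ v w : V, Γ.degree v = Γ.degree w := by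
    intro v w
    obtain ⟨g, hg⟩ := htrans.exists_smul_eq v w
    have hmap : Γ.neighborFinset w = (Γ.neighborFinset v).image (g • ·) := by
      ext x
      simp only [SimpleGraph.mem_neighborFinset, Finset.mem_image]
      constructor
      · intro hx
        refine ⟨g⁻¹ • x, ?_, by simp⟩
        rw [hadj g, hg, smul_inv_smul]
        exact hx
      · rintro ⟨y, hy, rfl⟩
        rw [← hg]
        exact (hadj g v y).mp hy
    rw [SimpleGraph.degree, SimpleGraph.degree, hmap,
      Finset.card_image_of_injective _ (MulAction.injective g)]
  -- pick a vertex
  have hne : Nonempty V := Fintype.card_pos_iff.mp (by omega)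
  obtain ⟨v⟩ := hne
  set d := Γ.degree v with hd
  -- d ≥ 1: otherwise v is isolated, contradicting connectedness
  have hd1 : 1 ≤ d := by
    by_contra h
    have hd0 : Γ.degree v = 0 := by omega
    -- there is another vertex
    obtain ⟨u, hu⟩ : ∃ u : V, u ≠ v := by
      have : 1 < Fintype.card V := by omega
      exact Fintype.exists_ne_of_one_lt_card this v
    obtain ⟨p⟩ := hconn.preconnected v u
    cases p with
    | nil => exact hu rfl
    | cons h q =>
      have : _ ∈ Γ.neighborFinset v := (SimpleGraph.mem_neighborFinset _ _ _).mpr h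
      rw [SimpleGraph.degree] at hd0
      simp [Finset.card_eq_zero.mp hd0] at this
  -- d ≥ 2: otherwise the graph is 1-regular, hence not connected on 6 vertices
  have hd2 : 2 ≤ d := by
    by_contra h
    have hreg : ∀ x : V, Γ.degree x = 1 := fun x => by
      rw [hdeg x v]; omega
    -- v has a unique neighbor w
    obtain ⟨w, hw⟩ : ∃ w, Γ.neighborFinset v = {w} :=
      Finset.card_eq_one.mp (hreg v)
    have hvw : Γ.Adj v w := by
      rw [← SimpleGraph.mem_neighborFinset, hw]; simp
    have hwv : Γ.neighborFinset w = {v} := by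
      obtain ⟨z, hz⟩ := Finset.card_eq_one.mp (hreg w)
      have : v ∈ Γ.neighborFinset w :=
        (SimpleGraph.mem_neighborFinset _ _ _).mpr hvw.symm
      rw [hz] at this ⊢
      simp at this
      rw [this]
    -- edges from {v, w} stay in {v, w}
    have hstep : ∀ a b : V, a ∈ ({v, w} : Set V) → Γ.Adj a b → b ∈ ({v, w} : Set V) := by
      rintro a b (rfl | rfl) hab
      · have : b ∈ Γ.neighborFinset a := (SimpleGraph.mem_neighborFinset _ _ _).mpr hab
        rw [hw] at this
        simp at this
        simp [this]
      · have : b ∈ Γ.neighborFinset a := (SimpleGraph.mem_neighborFinset _ _ _).mpr hab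
        rw [hwv] at this
        simp at this
        simp [this]
    have hwalk : ∀ (a u : V), Γ.Walk a u → a ∈ ({v, w} : Set V) → u ∈ ({v, w} : Set V) := by
      intro a u p
      induction p with
      | nil => exact id
      | cons hadj' p ih => intro ha; exact ih (hstep _ _ ha hadj')
    -- but there is a vertex outside {v, w}
    obtain ⟨u, hu⟩ : ∃ u : V, u ∉ ({v, w} : Set V) := by
      by_contra hcon
      push_neg at hcon
      have : (Finset.univ : Finset V) ⊆ {v, w} := by
        intro x _
        have := hcon x
        simpa using this
      have := Finset.card_le_card this
      have h2 : ({v, w} : Finset V).card ≤ 2 := Finset.card_insert_le _ _ |>.trans (by simp)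
      simp [hV] at this
      omega
    obtain ⟨p⟩ := hconn.preconnected v u
    exact hu (hwalk v u p (by simp))
  -- handshake: 6 * d = 2 * edges
  have hsum : ∑ x : V, Γ.degree x = 2 * Γ.edgeFinset.card :=
    Γ.sum_degrees_eq_twice_card_edges
  have hconst : ∑ x : V, Γ.degree x = 6 * d := by
    rw [Finset.sum_congr rfl (fun x _ => hdeg x v)]
    simp [hV, ← hd, mul_comm]
  omega
end

section
/- Let ζ ∈ ℂ with ζ³ = 1 and ζ ≠ 1, and let a, b ∈ ℂ with b ≠ 0. Define F(z₀, z₁, z₂) = z₀³z₂ + z₁³z₂ + z₀²z₁² + a·z₀z₁z₂² + b·z₂⁴. Suppose (z₀, z₁, z₂) ∈ ℂ³ with (z₀, z₁, z₂) ≠ (0,0,0), F(z₀, z₁, z₂) = 0, and there exists λ ∈ ℂ with (ζz₀, ζ²z₁, z₂) = (λz₀, λz₁, λz₂). Then either z₁ = 0 and z₂ = 0, or z₀ = 0 and z₂ = 0. -/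
/-- The fixed points of `σ : (z₀ : z₁ : z₂) ↦ (ζz₀ : ζ²z₁ : z₂)` on the quartic curve
`F = 0` are `(1:0:0)` and `(0:1:0)`. -/
theorem stmt_4 (ζ a b : ℂ) (hζ3 : ζ ^ 3 = 1) (hζ : ζ ≠ 1) (hb : b ≠ 0)
    (z₀ z₁ z₂ : ℂ) (hz : (z₀, z₁, z₂) ≠ (0, 0, 0))
    (hF : z₀ ^ 3 * z₂ + z₁ ^ 3 * z₂ + z₀ ^ 2 * z₁ ^ 2 + a * z₀ * z₁ * z₂ ^ 2 + b * z₂ ^ 4 = 0)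
    (hfix : ∃ l : ℂ, (ζ * z₀, ζ ^ 2 * z₁, z₂) = (l * z₀, l * z₁, l * z₂)) :
    (z₁ = 0 ∧ z₂ = 0) ∨ (z₀ = 0 ∧ z₂ = 0) := by
  obtain ⟨l, h⟩ := hfix
  rw [Prod.mk.injEq, Prod.mk.injEq] at h
  obtain ⟨h0, h1, h2⟩ := h
  by_cases hz2 : z₂ = 0
  · subst hz2
    have : z₀ ^ 2 * z₁ ^ 2 = 0 := by linear_combination hF
    rcases mul_eq_zero.1 this with h | h
    · exact Or.inr ⟨pow_eq_zero_iff (by norm_num) |>.1 h, rfl⟩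
    · exact Or.inl ⟨pow_eq_zero_iff (by norm_num) |>.1 h, rfl⟩
  · exfalso
    have hl : l = 1 := by
      have := mul_right_cancel₀ hz2 (show l * z₂ = 1 * z₂ by rw [← h2]; ring)
      exact this
    subst hl
    have hz0 : z₀ = 0 := by
      by_contra h
      exact hζ (mul_right_cancel₀ h (by linear_combination h0))
    have hζ2 : ζ ^ 2 ≠ 1 := by
      intro h
      apply hζ
      have : ζ * ζ ^ 2 = ζ ^ 3 := by ring
      rw [h, hζ3] at this
      simpa using this
    have hz1 : z₁ = 0 := by
      by_contra h
      exact hζ2 (mul_right_cancel₀ h (by linear_combination h1))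
    rw [hz0, hz1] at hF
    simp at hF
    rcases hF with h | h
    · exact hb h
    · exact hz2 h
end
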